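/- arXiv:math/0701283 — 3 statements merged into one kernel-verified Lean document; each statement's English description precedes it below -/
import Mathlib

section
/- Let A be a finite dimensional k-algebra with complete set of primitive orthogonal idempotents e_1,...,e_n and radical r, with e_i r e_i = 0 for all i. Let f, f' be two unitary derivations of A whose commutator [f, f'] equals the inner derivation δ_e for some e = Σ t_i e_i with t_i ∈ k. Then for any i, j, the restrictions of f and f' to e_j r e_i are linear endomorphisms of e_j r e_i whose commutator equals (t_j − t_i)·Id on e_j r e_i; moreover if both restrictions are diagonalizable, then this commutator is zero. -/
/-- let `A` be a finite dimensional `k`-algebra with complete set of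
primitive orthogonal idempotents `e 1, ..., e n` and radical `r` satisfying
`e i * r * e i = 0` for all `i`. If `f, f'` are unitary derivations whose
commutator is the inner derivation `δ_c` with `c = Σ t i • e i`, then on each
`W i j = e j * r * e i` the commutator of the restrictions of `f` and `f'` is
`(t j − t i) • Id`; moreover, if both restrictions are diagonalizable then this
commutator is zero. -/
theorem stmt5 (k : Type*) [Field k] (A : Type*) [Ring A] [Algebra k A]
    [FiniteDimensional k A]
    (n : ℕ) (e : Fin n → A)
    (horth : ∀ i j, i ≠ j → e i * e j = 0)
    (hidem : ∀ i, IsIdempotentElem (e i))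
    (hcomplete : ∑ i, e i = 1)
    (rad : Ideal A) (hrad : rad = (⊥ : Ideal A).jacobson)
    (hnocycle : ∀ i, ∀ a ∈ rad, e i * a * e i = 0)
    (f f' : A →ₗ[k] A)
    (hderf : ∀ a b : A, f (a * b) = a * f b + f a * b)
    (hderf' : ∀ a b : A, f' (a * b) = a * f' b + f' a * b)
    (hef : ∀ i, f (e i) = 0) (hef' : ∀ i, f' (e i) = 0)
    (t : Fin n → k)
    (hcomm : ∀ a : A, f (f' a) - f' (f a) = (∑ i, t i • e i) * a - a * (∑ i, t i • e i))
    (W : Fin n → Fin n → Submodule k A)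
    (hW : ∀ i j, W i j = Submodule.map
      (LinearMap.mulLeft k (e j) ∘ₗ LinearMap.mulRight k (e i))
      (Submodule.restrictScalars k rad))
    (hfW : ∀ i j, ∀ x ∈ W i j, f x ∈ W i j)
    (hf'W : ∀ i j, ∀ x ∈ W i j, f' x ∈ W i j) :
    ∀ i j,
      (∀ x ∈ W i j, f (f' x) - f' (f x) = (t j - t i) • x) ∧
      ((∃ (m : ℕ) (b : Module.Basis (Fin m) k (W i j)), ∀ l, ∃ s : k,
          f.restrict (hfW i j) (b l) = s • b l) →
       (∃ (m : ℕ) (b : Module.Basis (Fin m) k (W i j)), ∀ l, ∃ s : k,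
          f'.restrict (hf'W i j) (b l) = s • b l) →
       ∀ x ∈ W i j, f (f' x) = f' (f x)) := by

  intro i j
  have hmem : ∀ x ∈ W i j, e j * x = x ∧ x * e i = x ∧
      (∀ l, l ≠ j → e l * x = 0) ∧ (∀ l, l ≠ i → x * e l = 0) := by
    intro x hx
    rw [hW] at hx
    obtain ⟨a, -, rfl⟩ := hx
    simp only [LinearMap.coe_comp, Function.comp_apply, LinearMap.mulLeft_apply,
      LinearMap.mulRight_apply]
    refine ⟨?_, ?_, ?_, ?_⟩
    · rw [← mul_assoc, hidem j]
    · rw [mul_assoc, mul_assoc, hidem i]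
    · intro l hl
      rw [← mul_assoc, horth l j hl, zero_mul]
    · intro l hl
      rw [mul_assoc, mul_assoc, horth i l (fun h => hl h.symm), mul_zero, mul_zero]
  have key : ∀ x ∈ W i j, f (f' x) - f' (f x) = (t j - t i) • x := by
    intro x hx
    obtain ⟨h1, h2, h3, h4⟩ := hmem x hx
    rw [hcomm x, Finset.sum_mul, Finset.mul_sum]
    have l1 : ∀ l ∈ Finset.univ, (t l • e l) * x = if l = j then t j • x else 0 := by
      intro l _
      by_cases h : l = j
      · subst h; simp [smul_mul_assoc, h1]
      · simp [h, smul_mul_assoc, h3 l h]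
    have l2 : ∀ l ∈ Finset.univ, x * (t l • e l) = if l = i then t i • x else 0 := by
      intro l _
      by_cases h : l = i
      · subst h; simp [mul_smul_comm, h2]
      · simp [h, mul_smul_comm, h4 l h]
    rw [Finset.sum_congr rfl l1, Finset.sum_congr rfl l2]
    simp [Finset.sum_ite_eq', sub_smul]
  refine ⟨key, ?_⟩
  rintro - ⟨m, b, hb⟩ x hx
  set F := f.restrict (hfW i j) with hF
  set G := f'.restrict (hf'W i j) with hG
  choose s hs using hb
  have hcommV : ∀ v : W i j, F (G v) - G (F v) = (t j - t i) • v := by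
    intro v
    apply Subtype.ext
    push_cast
    simp only [hF, hG, LinearMap.restrict_coe_apply]
    exact key v v.2
  rcases Nat.eq_zero_or_pos m with hm | hm
  · subst hm
    have hsub : Subsingleton (W i j) := b.repr.toEquiv.subsingleton
    have hx0 : x = 0 := by
      have : (⟨x, hx⟩ : W i j) = 0 := Subsingleton.elim _ _
      simpa using congrArg Subtype.val this
    rw [hx0]
    simp
  · have c0 : t j - t i = 0 := by
      set l : Fin m := ⟨0, hm⟩
      have hG2 : G (F (b l)) = s l • F (b l) - (t j - t i) • b l := by
        have h := hcommV (b l)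
        rw [hs l, map_smul] at h
        rw [← h]; abel
      have hdiag : ∀ u : W i j, b.repr (G u) l = s l * b.repr u l := by
        intro u
        conv_lhs => rw [← b.sum_repr u, map_sum, map_sum]
        rw [Finsupp.finset_sum_apply, Finset.sum_eq_single l]
        · simp [map_smul, hs, mul_comm]
        · intro m' _ hm'
          simp [map_smul, hs, Finsupp.single_apply, hm']
        · simp
      have h1 := congrArg (fun v => b.repr v l) hG2
      simp only [hdiag, map_sub, map_smul, Finsupp.sub_apply, Finsupp.smul_apply,
        Module.Basis.repr_self, smul_eq_mul, Finsupp.single_eq_same, mul_one] at h1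
      linear_combination h1
    have := key x hx
    rw [c0, zero_smul, sub_eq_zero] at this
    exact this
end

section
/- Let Q be a finite quiver without oriented cycles, I an admissible ideal of kQ, and d : kQ → kQ a linear map such that d(I) ⊆ I and d(u) = t_u·u for some scalar t_u ∈ k for each path u. Fix a total order on the paths of Q and let (r_1,...,r_t) be the (reduced) Gröbner basis of I, i.e. the unique basis of I such that each r_j has leading path u_{i_j} with coefficient 1, each u_{i_j} occurs in no other r_{j'}, and i_1 < ... < i_t. Then d(r_j) ∈ k·r_j for every j. -/
open Quiver

universe u v

/-- The index set for the path basis of the path algebra `kQ`: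
triples `⟨a, b, p⟩` with `p` a path from `a` to `b` in `Q`. -/
abbrev PathIdx (V : Type u) [Quiver.{v + 1} V] : Type (max u (v + 1)) :=
  Σ a b : V, Quiver.Path a b

/-- The underlying vector space of the path algebra `kQ`:
the free `k`-module on the set of paths of `Q`. -/
abbrev PathAlg (k : Type*) [Field k] (V : Type u) [Quiver.{v + 1} V] :=
  PathIdx V →₀ k

open scoped Classical in
/-- The multiplication of the path algebra: bilinear extension of concatenation
of composable paths (and zero on non-composable pairs); the product `mulPA f g`
concatenates paths of `g` followed by paths of `f` (paths are read right-to-left). -/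
noncomputable def mulPA {k : Type*} [Field k] {V : Type u} [Quiver.{v + 1} V]
    (f g : PathAlg k V) : PathAlg k V :=
  f.sum fun p c => g.sum fun q d =>
    if h : q.2.1 = p.1 then
      Finsupp.single ⟨q.1, p.2.1, (q.2.2.cast rfl h).comp p.2.2⟩ (c * d)
    else 0

/-- The trivial path `e x` at a vertex, as an element of the path algebra. -/
noncomputable def ePA (k : Type*) [Field k] {V : Type u} [Quiver.{v + 1} V] (x : V) :
    PathAlg k V :=
  Finsupp.single ⟨x, x, Quiver.Path.nil⟩ 1

/-- The identity element `Σ_x e x` of the path algebra. -/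
noncomputable def onePA (k : Type*) [Field k] (V : Type u) [Quiver.{v + 1} V] [Fintype V] :
    PathAlg k V :=
  ∑ x : V, ePA k x

/-- let `Q` be a finite quiver without oriented cycles, `I` an
admissible ideal of `kQ`, and `d : kQ → kQ` a linear map with `d I ⊆ I` which is
diagonal on the path basis (`d u = t u • u` for each path `u`). Fix a total
order on the paths (an enumeration `ord : PathIdx V ≃ Fin N`) and let
`(r 0, ..., r (tlen-1))` be the reduced Gröbner basis of `I` with respect to
this order (characterized by the echelon conditions below). Then
`d (r j) ∈ k • r j` for every `j`. -/
theorem stmt11 (k : Type*) [Field k] (V : Type u) [Quiver.{v + 1} V]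
    [Fintype V] [∀ a b : V, Fintype (a ⟶ b)]
    (hacyclic : ∀ (a : V) (p : Quiver.Path a a), p = Quiver.Path.nil)
    (N : ℕ) (ord : PathIdx V ≃ Fin N)
    (bQ : Module.Basis (Fin N) k (PathAlg k V))
    (hbQ : bQ = (Finsupp.basisSingleOne : Module.Basis (PathIdx V) k (PathAlg k V)).reindex ord)
    (I : Submodule k (PathAlg k V))
    -- `I` is admissible: `I ⊆ (kQ⁺)²` and `(kQ⁺)^N₀ ⊆ I` for some `N₀`
    (hadm1 : ∀ f ∈ I, ∀ p ∈ f.support, 2 ≤ (p : PathIdx V).2.2.length)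
    (hadm2 : ∃ N₀ : ℕ, ∀ p : PathIdx V, N₀ ≤ p.2.2.length → Finsupp.single p (1 : k) ∈ I)
    (d : PathAlg k V →ₗ[k] PathAlg k V)
    (t : PathIdx V → k)
    (hdiag : ∀ p : PathIdx V, d (Finsupp.single p 1) = t p • Finsupp.single p 1)
    (hdI : ∀ f ∈ I, d f ∈ I)
    -- the reduced Gröbner basis `(r j)` of `I`, with leading paths `idx`
    (tlen : ℕ) (r : Fin tlen → PathAlg k V) (idx : Fin tlen → Fin N)
    (hmono : StrictMono idx)
    (hrI : ∀ j, r j ∈ I)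
    (hspan : Submodule.span k (Set.range r) = I)
    (hlead : ∀ j, bQ.coord (idx j) (r j) = 1)
    (hech : ∀ j i, idx j < i → bQ.coord i (r j) = 0)
    (hred : ∀ j j', j ≠ j' → bQ.coord (idx j) (r j') = 0) :
    ∀ j, ∃ c : k, d (r j) = c • r j := by
  classical
  have hcoord : ∀ (i : Fin N) (f : PathAlg k V), bQ.coord i f = f (ord.symm i) := by
    intro i f
    subst hbQ
    simp [Module.Basis.coord_apply, Module.Basis.repr_reindex_apply]
  have hd : ∀ (f : PathAlg k V) (q : PathIdx V), d f q = t q * f q := by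
    intro f
    induction f using Finsupp.induction_linear with
    | zero => simp
    | add f g hf hg => intro q; simp [map_add, hf, hg, mul_add]
    | single p c =>
      intro q
      have h1 : d (Finsupp.single p c) = c • (t p • Finsupp.single p (1 : k)) := by
        rw [← hdiag, ← map_smul]
        congr 1
        simp [Finsupp.smul_single]
      rw [h1]
      by_cases h : q = p
      · subst h; simp [Finsupp.single_apply]; ring
      · simp [Finsupp.single_apply, Ne.symm h]
  intro j
  refine ⟨t (ord.symm (idx j)), ?_⟩
  set c0 := t (ord.symm (idx j)) with hc0
  set g := d (r j) - c0 • r j with hgdef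
  have hgI : g ∈ I :=
    Submodule.sub_mem _ (hdI _ (hrI j)) (Submodule.smul_mem _ _ (hrI j))
  -- coordinates of g at the leading indices vanish
  have hgcoord : ∀ j', bQ.coord (idx j') g = 0 := by
    intro j'
    have hdg : bQ.coord (idx j') (d (r j)) =
        t (ord.symm (idx j')) * bQ.coord (idx j') (r j) := by
      rw [hcoord, hcoord, hd]
    rw [hgdef, map_sub, map_smul, hdg]
    by_cases h : j' = j
    · subst h; rw [hlead]; simp [hc0]
    · rw [hred j' j h]; simp
  rw [← hspan] at hgI
  obtain ⟨c, hc⟩ := Submodule.mem_span_range_iff_exists_fun k |>.mp hgI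
  have hczero : ∀ j', c j' = 0 := by
    intro j'
    have := congrArg (bQ.coord (idx j')) hc
    rw [hgcoord j'] at this
    rw [map_sum] at this
    have hsum : ∀ i ∈ Finset.univ, i ≠ j' →
        bQ.coord (idx j') (c i • r i) = 0 := by
      intro i _ hi
      rw [map_smul, hred j' i (Ne.symm hi)]
      simp
    rw [Finset.sum_eq_single j' hsum (by simp)] at this
    rw [map_smul, hlead j'] at this
    simpa using this
  have hg0 : g = 0 := by
    rw [← hc]
    apply Finset.sum_eq_zero
    intro i _
    rw [hczero i, zero_smul]
  have := sub_eq_zero.mp hg0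
  exact this
end

section
/- Let Q be a finite connected quiver without oriented cycles and I an admissible ideal of kQ generated by minimal relations r_1,...,r_t. Then the homotopy relation ∼_I generated by (1) αα⁻¹ ∼ e_y, α⁻¹α ∼ e_x for arrows α : x → y, (2) compatibility with concatenation, and (3) u ∼ v whenever u, v are two paths appearing with nonzero coefficient in a common minimal relation of I, coincides with the relation generated by (1), (2), and (3') u ∼ v whenever u, v appear with nonzero coefficient in some r_i. -/
open Quiver

universe u v

/-- Walks in `Q` are paths in the double quiver `Symmetrify Q`. Given a set `S`
of pairs of parallel paths of `Q`, `HRel S` is the homotopy relation on walks: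
the smallest equivalence relation such that (1) `α α⁻¹ ∼ e` and `α⁻¹ α ∼ e` for
every arrow `α`, (2) it is compatible with concatenation of walks, and (3)
`u ∼ v` for every pair `(u, v) ∈ S`. -/
inductive HRel {V : Type u} [Quiver.{v + 1} V]
    (S : Set (Σ a b : V, Quiver.Path a b × Quiver.Path a b)) :
    ∀ {a b : Quiver.Symmetrify V}, Quiver.Path a b → Quiver.Path a b → Prop
  | of {a b : V} (uu vv : Quiver.Path a b)
      (h : (⟨a, b, (uu, vv)⟩ : Σ a b : V, Quiver.Path a b × Quiver.Path a b) ∈ S) :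
      HRel S (Quiver.Symmetrify.of.mapPath uu) (Quiver.Symmetrify.of.mapPath vv)
  | cancel {a b : Quiver.Symmetrify V} (e : a ⟶ b) :
      HRel S (e.toPath.comp (Quiver.reverse e).toPath) Quiver.Path.nil
  | comp_left {a b c : Quiver.Symmetrify V} {p q : Quiver.Path a b}
      (w : Quiver.Path b c) : HRel S p q → HRel S (p.comp w) (q.comp w)
  | comp_right {a b c : Quiver.Symmetrify V} (w : Quiver.Path c a)
      {p q : Quiver.Path a b} : HRel S p q → HRel S (w.comp p) (w.comp q)
  | refl {a b : Quiver.Symmetrify V} (p : Quiver.Path a b) : HRel S p p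
  | symm {a b : Quiver.Symmetrify V} {p q : Quiver.Path a b} :
      HRel S p q → HRel S q p
  | trans {a b : Quiver.Symmetrify V} {p q r : Quiver.Path a b} :
      HRel S p q → HRel S q r → HRel S p r

/-- The set of pairs of parallel paths appearing (with a nonzero coefficient) in
a common element of a set `T` of elements of the path algebra. -/
def relPairs {k : Type*} [Field k] {V : Type u} [Quiver.{v + 1} V]
    (T : Set (PathAlg k V)) : Set (Σ a b : V, Quiver.Path a b × Quiver.Path a b) :=
  {x | ∃ f ∈ T, (⟨x.1, x.2.1, x.2.2.1⟩ : PathIdx V) ∈ f.support ∧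
    (⟨x.1, x.2.1, x.2.2.2⟩ : PathIdx V) ∈ f.support}

/-- A submodule of the path algebra is a (two-sided) ideal iff it is stable
under left and right multiplication. -/
def IsPathIdeal {k : Type*} [Field k] {V : Type u} [Quiver.{v + 1} V]
    (I : Submodule k (PathAlg k V)) : Prop :=
  ∀ f ∈ I, ∀ g : PathAlg k V, mulPA g f ∈ I ∧ mulPA f g ∈ I

/-- A minimal relation of an ideal `I` of the path algebra: a nonzero element of
`I` no nonempty proper subsum of which lies in `I`. -/
def IsMinimalRelation {k : Type*} [Field k] {V : Type u} [Quiver.{v + 1} V]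
    (I : Submodule k (PathAlg k V)) (f : PathAlg k V) : Prop :=
  f ∈ I ∧ f ≠ 0 ∧ ∀ S : Finset (PathIdx V), S ⊆ f.support → S.Nonempty →
    S ≠ f.support → (∑ p ∈ S, Finsupp.single p (f p)) ∉ I

section Helpers

open scoped Classical

variable {k : Type*} [Field k] {V : Type u} [Quiver.{v + 1} V]

lemma mulPA_single_left (P : PathIdx V) (c : k) (g : PathAlg k V) :
    mulPA (Finsupp.single P c) g =
      g.sum fun q d => if h : q.2.1 = P.1 then
        Finsupp.single ⟨q.1, P.2.1, (q.2.2.cast rfl h).comp P.2.2⟩ (c * d) else 0 := by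
  unfold mulPA
  apply Finsupp.sum_single_index
  simp [Finsupp.sum]

lemma mulPA_single_right (f : PathAlg k V) (Q : PathIdx V) (c : k) :
    mulPA f (Finsupp.single Q c) =
      f.sum fun p d => if h : Q.2.1 = p.1 then
        Finsupp.single ⟨Q.1, p.2.1, (Q.2.2.cast rfl h).comp p.2.2⟩ (d * c) else 0 := by
  unfold mulPA
  refine Finsupp.sum_congr fun p hp => ?_
  apply Finsupp.sum_single_index
  split <;> simp

lemma mulPA_zero_left (g : PathAlg k V) : mulPA 0 g = 0 :=
  Finsupp.sum_zero_index

lemma mulPA_zero_right (f : PathAlg k V) : mulPA f 0 = 0 := by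
  unfold mulPA
  simp [Finsupp.sum_zero_index, Finsupp.sum_fun_zero]

lemma mulPA_add_left (f₁ f₂ g : PathAlg k V) :
    mulPA (f₁ + f₂) g = mulPA f₁ g + mulPA f₂ g := by
  unfold mulPA
  apply Finsupp.sum_add_index'
  · intro p; simp [Finsupp.sum]
  · intro p c₁ c₂
    rw [← Finsupp.sum_add]
    refine Finsupp.sum_congr fun q hq => ?_
    split
    · rw [add_mul, Finsupp.single_add]
    · rw [add_zero]

lemma mulPA_add_right (f g₁ g₂ : PathAlg k V) :
    mulPA f (g₁ + g₂) = mulPA f g₁ + mulPA f g₂ := by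
  unfold mulPA
  rw [← Finsupp.sum_add]
  refine Finsupp.sum_congr fun p hp => ?_
  apply Finsupp.sum_add_index'
  · intro q; split <;> simp
  · intro q d₁ d₂
    split
    · rw [mul_add, Finsupp.single_add]
    · rw [add_zero]

lemma sum_ite_single_eq_filter (f : PathAlg k V) (P : PathIdx V → Prop) :
    (f.sum fun p c => if P p then Finsupp.single p c else 0) = f.filter P := by
  induction f using Finsupp.induction_linear with
  | zero => rw [Finsupp.sum_zero_index, Finsupp.filter_zero]
  | add f g ihf ihg =>
    rw [Finsupp.filter_add, ← ihf, ← ihg]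
    apply Finsupp.sum_add_index'
    · intro p; split <;> simp
    · intro p c₁ c₂; split <;> simp [Finsupp.single_add]
  | single p c =>
    rw [Finsupp.sum_single_index (by split <;> simp)]
    by_cases h : P p
    · rw [if_pos h, Finsupp.filter_single_of_pos (p := P) h]
    · rw [if_neg h, Finsupp.filter_single_of_neg (p := P) h]

lemma filter_eq_sum_single (P : PathIdx V → Prop) (f : PathAlg k V) :
    f.filter P = ∑ p ∈ f.support.filter P, Finsupp.single p (f p) := by
  rw [← sum_ite_single_eq_filter f P, Finsupp.sum, Finset.sum_filter]

end Helpers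

section Helpers2

open scoped Classical

variable {k : Type*} [Field k] {V : Type u} [Quiver.{v + 1} V]

lemma Path.cast_self {a b : V} (p : Quiver.Path a b) (h1 : a = a) (h2 : b = b) :
    p.cast h1 h2 = p :=
  Quiver.Path.cast_rfl_rfl p

lemma mulPA_ePA_right (f : PathAlg k V) (a : V) :
    mulPA f (ePA k a) = f.filter (fun p => p.1 = a) := by
  rw [show ePA k a = Finsupp.single (⟨a, a, Quiver.Path.nil⟩ : PathIdx V) 1 from rfl,
    mulPA_single_right, ← sum_ite_single_eq_filter f (fun p => p.1 = a)]
  refine Finsupp.sum_congr fun p hp => ?_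
  obtain ⟨p1, p2, pp⟩ := p
  by_cases h : a = p1
  · subst h
    rw [dif_pos rfl, if_pos rfl]
    simp [Path.cast_self, Quiver.Path.nil_comp]
  · rw [dif_neg h, if_neg (fun hh => h hh.symm)]

lemma mulPA_ePA_left (b : V) (f : PathAlg k V) :
    mulPA (ePA k b) f = f.filter (fun p => p.2.1 = b) := by
  rw [show ePA k b = Finsupp.single (⟨b, b, Quiver.Path.nil⟩ : PathIdx V) 1 from rfl,
    mulPA_single_left, ← sum_ite_single_eq_filter f (fun p => p.2.1 = b)]
  refine Finsupp.sum_congr fun q hq => ?_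
  obtain ⟨q1, q2, qp⟩ := q
  by_cases h : q2 = b
  · subst h
    rw [dif_pos rfl, if_pos rfl]
    simp [Path.cast_self, Quiver.Path.comp_nil]
  · rw [dif_neg h, if_neg h]

/-- The homotopy relation transported to the index type of the path basis. -/
def RelIdx {V : Type u} [Quiver.{v + 1} V]
    (S : Set (Σ a b : V, Quiver.Path a b × Quiver.Path a b)) (x y : PathIdx V) : Prop :=
  ∃ (h1 : x.1 = y.1) (h2 : x.2.1 = y.2.1),
    HRel S (Quiver.Symmetrify.of.mapPath (x.2.2.cast h1 h2))
      (Quiver.Symmetrify.of.mapPath y.2.2)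

lemma relIdx_refl {V : Type u} [Quiver.{v + 1} V]
    (S : Set (Σ a b : V, Quiver.Path a b × Quiver.Path a b)) (x : PathIdx V) :
    RelIdx S x x :=
  ⟨rfl, rfl, by rw [Quiver.Path.cast_rfl_rfl]; exact HRel.refl _⟩

lemma relIdx_symm {V : Type u} [Quiver.{v + 1} V]
    {S : Set (Σ a b : V, Quiver.Path a b × Quiver.Path a b)} {x y : PathIdx V}
    (h : RelIdx S x y) : RelIdx S y x := by
  obtain ⟨x1, x2, xp⟩ := x
  obtain ⟨y1, y2, yp⟩ := y
  obtain ⟨h1, h2, H⟩ := h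
  dsimp at h1 h2 H ⊢
  subst h1; subst h2
  rw [Path.cast_self] at H
  exact ⟨rfl, rfl, by rw [Path.cast_self]; exact H.symm⟩

lemma relIdx_trans {V : Type u} [Quiver.{v + 1} V]
    {S : Set (Σ a b : V, Quiver.Path a b × Quiver.Path a b)} {x y z : PathIdx V}
    (h : RelIdx S x y) (g : RelIdx S y z) : RelIdx S x z := by
  obtain ⟨x1, x2, xp⟩ := x
  obtain ⟨y1, y2, yp⟩ := y
  obtain ⟨z1, z2, zp⟩ := z
  obtain ⟨h1, h2, H⟩ := h
  obtain ⟨g1, g2, G⟩ := g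
  dsimp at h1 h2 g1 g2 H G ⊢
  subst h1; subst h2; subst g1; subst g2
  rw [Path.cast_self] at H G
  exact ⟨rfl, rfl, by rw [Path.cast_self]; exact H.trans G⟩

/-- A set of basis paths saturated for the transported homotopy relation. -/
def SatC {V : Type u} [Quiver.{v + 1} V]
    (S : Set (Σ a b : V, Quiver.Path a b × Quiver.Path a b))
    (C : Set (PathIdx V)) : Prop :=
  ∀ ⦃x y : PathIdx V⦄, RelIdx S x y → x ∈ C → y ∈ C

lemma minimal_endpoints {I : Submodule k (PathAlg k V)} (hideal : IsPathIdeal I)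
    {f : PathAlg k V} (hf : IsMinimalRelation I f) {x y : PathIdx V}
    (hx : x ∈ f.support) (hy : y ∈ f.support) : y.1 = x.1 ∧ y.2.1 = x.2.1 := by
  obtain ⟨hfI, -, hmin⟩ := hf
  constructor
  · have h1 : f.filter (fun p => p.1 = x.1) ∈ I := by
      rw [← mulPA_ePA_right]; exact (hideal f hfI (ePA k x.1)).2
    rw [filter_eq_sum_single] at h1
    have hT : f.support.filter (fun p => p.1 = x.1) = f.support := by
      by_contra hne
      exact hmin (f.support.filter (fun p => p.1 = x.1)) (Finset.filter_subset _ _)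
        ⟨x, Finset.mem_filter.mpr ⟨hx, rfl⟩⟩ hne h1
    have hy' : y ∈ f.support.filter (fun p => p.1 = x.1) := by rw [hT]; exact hy
    exact (Finset.mem_filter.mp hy').2
  · have h1 : f.filter (fun p => p.2.1 = x.2.1) ∈ I := by
      rw [← mulPA_ePA_left]; exact (hideal f hfI (ePA k x.2.1)).1
    rw [filter_eq_sum_single] at h1
    have hT : f.support.filter (fun p => p.2.1 = x.2.1) = f.support := by
      by_contra hne
      exact hmin (f.support.filter (fun p => p.2.1 = x.2.1)) (Finset.filter_subset _ _)
        ⟨x, Finset.mem_filter.mpr ⟨hx, rfl⟩⟩ hne h1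
    have hy' : y ∈ f.support.filter (fun p => p.2.1 = x.2.1) := by rw [hT]; exact hy
    exact (Finset.mem_filter.mp hy').2

lemma filter_sum_finsupp (f : PathAlg k V) (F : PathIdx V → k → PathAlg k V)
    (P : PathIdx V → Prop) :
    Finsupp.filter P (f.sum F) = ∑ q ∈ f.support, Finsupp.filter P (F q (f q)) := by
  rw [Finsupp.sum, Finsupp.filter_sum]

lemma sum_filter_finsupp (f : PathAlg k V) (C' : Set (PathIdx V))
    (F : PathIdx V → k → PathAlg k V) :
    (Finsupp.filter (· ∈ C') f).sum F = ∑ q ∈ f.support, if q ∈ C' then F q (f q) else 0 := by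
  rw [Finsupp.sum, Finsupp.support_filter]
  refine (Finset.sum_congr rfl fun q hq => ?_).trans (Finset.sum_filter _ _)
  rw [Finsupp.filter_apply_pos (p := (· ∈ C')) _ (Finset.mem_filter.mp hq).2]

lemma filter_mulPA_single_left (C C' : Set (PathIdx V)) (P : PathIdx V) (c : k)
    (f : PathAlg k V)
    (hCC' : ∀ (q : PathIdx V) (h : q.2.1 = P.1),
      ((⟨q.1, P.2.1, (q.2.2.cast rfl h).comp P.2.2⟩ : PathIdx V) ∈ C ↔ q ∈ C')) :
    Finsupp.filter (· ∈ C) (mulPA (Finsupp.single P c) f) =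
      mulPA (Finsupp.single P c) (Finsupp.filter (· ∈ C') f) := by
  rw [mulPA_single_left, mulPA_single_left, filter_sum_finsupp, sum_filter_finsupp]
  refine Finset.sum_congr rfl fun q hq => ?_
  by_cases h : q.2.1 = P.1
  · rw [dif_pos h]
    by_cases hc : (⟨q.1, P.2.1, (q.2.2.cast rfl h).comp P.2.2⟩ : PathIdx V) ∈ C
    · rw [Finsupp.filter_single_of_pos (p := (· ∈ C)) hc, if_pos ((hCC' q h).mp hc)]
    · rw [Finsupp.filter_single_of_neg (p := (· ∈ C)) hc,
        if_neg (fun hq' => hc ((hCC' q h).mpr hq'))]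
  · rw [dif_neg h, Finsupp.filter_zero]
    simp [dif_neg h]

lemma filter_mulPA_single_right (C C'' : Set (PathIdx V)) (Q : PathIdx V) (c : k)
    (f : PathAlg k V)
    (hCC'' : ∀ (p : PathIdx V) (h : Q.2.1 = p.1),
      ((⟨Q.1, p.2.1, (Q.2.2.cast rfl h).comp p.2.2⟩ : PathIdx V) ∈ C ↔ p ∈ C'')) :
    Finsupp.filter (· ∈ C) (mulPA f (Finsupp.single Q c)) =
      mulPA (Finsupp.filter (· ∈ C'') f) (Finsupp.single Q c) := by
  rw [mulPA_single_right, mulPA_single_right, filter_sum_finsupp, sum_filter_finsupp]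
  refine Finset.sum_congr rfl fun p hp => ?_
  by_cases h : Q.2.1 = p.1
  · rw [dif_pos h]
    by_cases hc : (⟨Q.1, p.2.1, (Q.2.2.cast rfl h).comp p.2.2⟩ : PathIdx V) ∈ C
    · rw [Finsupp.filter_single_of_pos (p := (· ∈ C)) hc, if_pos ((hCC'' p h).mp hc)]
    · rw [Finsupp.filter_single_of_neg (p := (· ∈ C)) hc,
        if_neg (fun hp' => hc ((hCC'' p h).mpr hp'))]
  · rw [dif_neg h, Finsupp.filter_zero]
    simp [dif_neg h]

end Helpers2

section Helpers3

open scoped Classical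

variable {k : Type*} [Field k] {V : Type u} [Quiver.{v + 1} V]

lemma HRel_mono {S₁ S₂ : Set (Σ a b : V, Quiver.Path a b × Quiver.Path a b)}
    (h : ∀ (a b : V) (u v : Quiver.Path a b),
      (⟨a, b, (u, v)⟩ : Σ a b : V, Quiver.Path a b × Quiver.Path a b) ∈ S₁ →
      HRel S₂ (Quiver.Symmetrify.of.mapPath u) (Quiver.Symmetrify.of.mapPath v))
    {a b : Quiver.Symmetrify V} {p q : Quiver.Path a b} (H : HRel S₁ p q) :
    HRel S₂ p q := by
  induction H with
  | of u v hm => exact h _ _ u v hm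
  | cancel e => exact HRel.cancel e
  | comp_left w _ ih => exact HRel.comp_left w ih
  | comp_right w _ ih => exact HRel.comp_right w ih
  | refl p => exact HRel.refl p
  | symm _ ih => exact HRel.symm ih
  | trans _ _ ih₁ ih₂ => exact HRel.trans ih₁ ih₂

/-- The auxiliary ideal: elements all of whose saturated class-filters lie in `I`. -/
noncomputable def Jmod (I : Submodule k (PathAlg k V))
    (S : Set (Σ a b : V, Quiver.Path a b × Quiver.Path a b)) :
    Submodule k (PathAlg k V) where
  carrier := {f | ∀ C : Set (PathIdx V), SatC S C → Finsupp.filter (· ∈ C) f ∈ I}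
  add_mem' := fun hf hg C hC => by
    rw [Finsupp.filter_add]; exact I.add_mem (hf C hC) (hg C hC)
  zero_mem' := fun C hC => by rw [Finsupp.filter_zero]; exact I.zero_mem
  smul_mem' := fun c f hf C hC => by
    rw [Finsupp.filter_smul]; exact I.smul_mem c (hf C hC)

lemma mem_Jmod {I : Submodule k (PathAlg k V)}
    {S : Set (Σ a b : V, Quiver.Path a b × Quiver.Path a b)} {f : PathAlg k V} :
    f ∈ Jmod I S ↔ ∀ C : Set (PathIdx V), SatC S C → Finsupp.filter (· ∈ C) f ∈ I :=
  Iff.rfl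

lemma satC_comp_left {S : Set (Σ a b : V, Quiver.Path a b × Quiver.Path a b)}
    {C : Set (PathIdx V)} (hC : SatC S C) (P : PathIdx V) :
    SatC S {q | ∃ h : q.2.1 = P.1,
      (⟨q.1, P.2.1, (q.2.2.cast rfl h).comp P.2.2⟩ : PathIdx V) ∈ C} := by
  intro x y hxy hx
  obtain ⟨x1, x2, xp⟩ := x
  obtain ⟨y1, y2, yp⟩ := y
  obtain ⟨P1, P2, Pp⟩ := P
  obtain ⟨e1, e2, H⟩ := hxy
  obtain ⟨h, hm⟩ := hx
  dsimp at e1 e2 H h hm ⊢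
  subst e1; subst e2; subst h
  rw [Path.cast_self] at H hm
  refine ⟨rfl, ?_⟩
  rw [Path.cast_self]
  refine hC (x := ⟨x1, P2, xp.comp Pp⟩) ⟨rfl, rfl, ?_⟩ hm
  rw [Path.cast_self, Prefunctor.mapPath_comp, Prefunctor.mapPath_comp]
  exact HRel.comp_left _ H

lemma satC_comp_right {S : Set (Σ a b : V, Quiver.Path a b × Quiver.Path a b)}
    {C : Set (PathIdx V)} (hC : SatC S C) (Q : PathIdx V) :
    SatC S {p | ∃ h : Q.2.1 = p.1,
      (⟨Q.1, p.2.1, (Q.2.2.cast rfl h).comp p.2.2⟩ : PathIdx V) ∈ C} := by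
  intro x y hxy hx
  obtain ⟨x1, x2, xp⟩ := x
  obtain ⟨y1, y2, yp⟩ := y
  obtain ⟨Q1, Q2, Qp⟩ := Q
  obtain ⟨e1, e2, H⟩ := hxy
  obtain ⟨h, hm⟩ := hx
  dsimp at e1 e2 H h hm ⊢
  subst e1; subst e2; subst h
  rw [Path.cast_self] at H hm
  refine ⟨rfl, ?_⟩
  rw [Path.cast_self]
  refine hC (x := ⟨Q1, x2, Qp.comp xp⟩) ⟨rfl, rfl, ?_⟩ hm
  rw [Path.cast_self, Prefunctor.mapPath_comp, Prefunctor.mapPath_comp]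
  exact HRel.comp_right _ H

lemma Jmod_isPathIdeal {I : Submodule k (PathAlg k V)} (hideal : IsPathIdeal I)
    (S : Set (Σ a b : V, Quiver.Path a b × Quiver.Path a b)) :
    IsPathIdeal (Jmod I S) := by
  intro f hf g
  rw [mem_Jmod] at hf
  constructor
  · induction g using Finsupp.induction_linear with
    | zero =>
      rw [mem_Jmod]; intro C hC
      rw [mulPA_zero_left, Finsupp.filter_zero]; exact I.zero_mem
    | add g₁ g₂ ih₁ ih₂ =>
      rw [mem_Jmod]; intro C hC
      rw [mulPA_add_left, Finsupp.filter_add]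
      exact I.add_mem (ih₁ C hC) (ih₂ C hC)
    | single P c =>
      rw [mem_Jmod]; intro C hC
      rw [filter_mulPA_single_left C
        {q | ∃ h : q.2.1 = P.1,
          (⟨q.1, P.2.1, (q.2.2.cast rfl h).comp P.2.2⟩ : PathIdx V) ∈ C} P c f
        (fun q h => ⟨fun hm => ⟨h, hm⟩, fun hm' => hm'.2⟩)]
      exact (hideal _ (hf _ (satC_comp_left hC P)) (Finsupp.single P c)).1
  · induction g using Finsupp.induction_linear with
    | zero =>
      rw [mem_Jmod]; intro C hC
      rw [mulPA_zero_right, Finsupp.filter_zero]; exact I.zero_mem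
    | add g₁ g₂ ih₁ ih₂ =>
      rw [mem_Jmod]; intro C hC
      rw [mulPA_add_right, Finsupp.filter_add]
      exact I.add_mem (ih₁ C hC) (ih₂ C hC)
    | single Q c =>
      rw [mem_Jmod]; intro C hC
      rw [filter_mulPA_single_right C
        {p | ∃ h : Q.2.1 = p.1,
          (⟨Q.1, p.2.1, (Q.2.2.cast rfl h).comp p.2.2⟩ : PathIdx V) ∈ C} Q c f
        (fun p h => ⟨fun hm => ⟨h, hm⟩, fun hm' => hm'.2⟩)]
      exact (hideal _ (hf _ (satC_comp_right hC Q)) (Finsupp.single Q c)).2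

lemma relIdx_support_r {I : Submodule k (PathAlg k V)} (hideal : IsPathIdeal I)
    {t : ℕ} (r : Fin t → PathAlg k V) (hmin' : ∀ i, IsMinimalRelation I (r i)) (i : Fin t)
    {x w : PathIdx V} (hx : x ∈ (r i).support) (hw : w ∈ (r i).support) :
    RelIdx (relPairs (Set.range r)) x w := by
  obtain ⟨h1, h2⟩ := minimal_endpoints hideal (hmin' i) hw hx
  obtain ⟨x1, x2, xp⟩ := x
  obtain ⟨w1, w2, wp⟩ := w
  dsimp at h1 h2
  subst h1; subst h2
  refine ⟨rfl, rfl, ?_⟩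
  rw [Path.cast_self]
  exact HRel.of xp wp ⟨r i, ⟨i, rfl⟩, hx, hw⟩

lemma r_mem_Jmod {I : Submodule k (PathAlg k V)} (hideal : IsPathIdeal I)
    {t : ℕ} (r : Fin t → PathAlg k V) (hmin' : ∀ i, IsMinimalRelation I (r i)) (i : Fin t) :
    r i ∈ Jmod I (relPairs (Set.range r)) := by
  rw [mem_Jmod]
  intro C hC
  by_cases hex : ∃ x ∈ (r i).support, x ∈ C
  · obtain ⟨x, hx, hxC⟩ := hex
    have heq : (r i).filter (· ∈ C) = r i := by
      rw [Finsupp.filter_eq_self_iff]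
      intro w hw
      exact hC (relIdx_support_r hideal r hmin' i hx (Finsupp.mem_support_iff.mpr hw)) hxC
    rw [heq]; exact (hmin' i).1
  · have heq : (r i).filter (· ∈ C) = 0 := by
      rw [Finsupp.filter_eq_zero_iff]
      intro w hwC
      by_contra hw0
      exact hex ⟨w, Finsupp.mem_support_iff.mpr hw0, hwC⟩
    rw [heq]; exact I.zero_mem

lemma key_relIdx {I : Submodule k (PathAlg k V)} (hideal : IsPathIdeal I)
    {t : ℕ} (r : Fin t → PathAlg k V) (hmin' : ∀ i, IsMinimalRelation I (r i))
    (hgen : ∀ J : Submodule k (PathAlg k V), IsPathIdeal J → (∀ i, r i ∈ J) → I ≤ J)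
    {f : PathAlg k V} (hf : IsMinimalRelation I f) {x y : PathIdx V}
    (hx : x ∈ f.support) (hy : y ∈ f.support) :
    RelIdx (relPairs (Set.range r)) y x := by
  set S := relPairs (Set.range r) with hS
  have hfJ : f ∈ Jmod I S :=
    hgen (Jmod I S) (Jmod_isPathIdeal hideal S) (r_mem_Jmod hideal r hmin') hf.1
  set C : Set (PathIdx V) := {w | RelIdx S w x} with hCdef
  have hC : SatC S C := fun w w' hww' hw => relIdx_trans (relIdx_symm hww') hw
  have h1 : f.filter (· ∈ C) ∈ I := (mem_Jmod.mp hfJ) C hC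
  rw [filter_eq_sum_single] at h1
  have hT : f.support.filter (· ∈ C) = f.support := by
    by_contra hne
    exact hf.2.2 (f.support.filter (· ∈ C)) (Finset.filter_subset _ _)
      ⟨x, Finset.mem_filter.mpr ⟨hx, relIdx_refl S x⟩⟩ hne h1
  have hy' : y ∈ f.support.filter (· ∈ C) := by rw [hT]; exact hy
  exact (Finset.mem_filter.mp hy').2

end Helpers3

/-- Bardzell–Marcos: let `Q` be a finite connected quiver without
oriented cycles and `I` an admissible ideal of `kQ` generated, as a two-sided
ideal, by minimal relations `r 1, ..., r t`. Then the homotopy relation `∼_I`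
(generated by cancellation of inverse arrows, compatibility with concatenation,
and `u ∼ v` whenever `u, v` appear in a common minimal relation of `I`)
coincides with the relation defined in the same way but using only the pairs of
paths appearing in a common `r i`. -/
theorem stmt19 (k : Type*) [Field k] (V : Type u) [Quiver.{v + 1} V]
    [Fintype V] [∀ a b : V, Fintype (a ⟶ b)]
    (hconn : ∀ a b : Quiver.Symmetrify V, Nonempty (Quiver.Path a b))
    (hacyclic : ∀ (a : V) (p : Quiver.Path a a), p = Quiver.Path.nil)
    (I : Submodule k (PathAlg k V))
    (hideal : IsPathIdeal I)
    -- `I` is admissible: `I ⊆ (kQ⁺)²` and `(kQ⁺)^N₀ ⊆ I` for some `N₀`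
    (hadm1 : ∀ f ∈ I, ∀ p ∈ f.support, 2 ≤ (p : PathIdx V).2.2.length)
    (hadm2 : ∃ N₀ : ℕ, ∀ p : PathIdx V, N₀ ≤ p.2.2.length → Finsupp.single p (1 : k) ∈ I)
    (t : ℕ) (r : Fin t → PathAlg k V)
    (hmin : ∀ i, IsMinimalRelation I (r i))
    -- `I` is generated by the `r i` as a two-sided ideal
    (hgen : ∀ J : Submodule k (PathAlg k V), IsPathIdeal J → (∀ i, r i ∈ J) → I ≤ J) :
    ∀ {a b : Quiver.Symmetrify V} (p q : Quiver.Path a b),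
      HRel (relPairs {f | IsMinimalRelation I f}) p q ↔
      HRel (relPairs (Set.range r)) p q := by
  intro a b p q
  constructor
  · intro H
    refine HRel_mono ?_ H
    intro a' b' u v hm
    obtain ⟨f, hfmin, hu, hv⟩ := hm
    obtain ⟨h1, h2, H'⟩ := key_relIdx hideal r hmin hgen hfmin hu hv
    rw [Path.cast_self] at H'
    exact H'.symm
  · intro H
    refine HRel_mono ?_ H
    intro a' b' u v hm
    obtain ⟨g, hg, hu, hv⟩ := hm
    obtain ⟨i, rfl⟩ := hg
    exact HRel.of u v ⟨r i, hmin i, hu, hv⟩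
end
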